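/- For every connected graph G with n vertices and m edges, tmc(G) ≥ m − n + 2 + l(G). -/

import Mathlib

open SimpleGraph

/-- A walk in a total-colored graph is *total monochromatic* if all of its edges and
internal vertices have the same color. -/
def IsTotalMonoWalk {V : Type*} {G : SimpleGraph V} (ce : Sym2 V → ℕ) (cv : V → ℕ)
    {u v : V} (w : G.Walk u v) : Prop :=
  ∃ c, (∀ e ∈ w.edges, ce e = c) ∧ ∀ x ∈ w.support.tail.dropLast, cv x = c

/-- A total coloring (edge coloring `ce`, vertex coloring `cv`) of `G` is a
*TMC-coloring* if any two vertices are connected by a total monochromatic path. -/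
def IsTMCColoring {V : Type*} (G : SimpleGraph V) (ce : Sym2 V → ℕ) (cv : V → ℕ) : Prop :=
  ∀ u v : V, u ≠ v → ∃ w : G.Walk u v, w.IsPath ∧ IsTotalMonoWalk ce cv w

/-- The number of colors used by a total coloring of `G`:
colors appearing on edges of `G` together with colors appearing on vertices. -/
noncomputable def colorsUsed {V : Type*} (G : SimpleGraph V) (ce : Sym2 V → ℕ) (cv : V → ℕ) : ℕ :=
  (ce '' G.edgeSet ∪ Set.range cv).ncard

/-- The total monochromatic connection number `tmc G`: the maximum number of colors
used in a TMC-coloring of `G`. -/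
noncomputable def tmc {V : Type*} [Fintype V] (G : SimpleGraph V) : ℕ :=
  sSup {k | ∃ ce cv, IsTMCColoring G ce cv ∧ colorsUsed G ce cv = k}

/-- The number of leaves (vertices of degree one) of a graph. -/
noncomputable def numLeaves {V : Type*} (T : SimpleGraph V) : ℕ :=
  {v : V | (T.neighborSet v).ncard = 1}.ncard

/-- `maxLeaves G` is the maximum number of leaves over all spanning trees of `G`. -/
noncomputable def maxLeaves {V : Type*} [Fintype V] (G : SimpleGraph V) : ℕ :=
  sSup {k | ∃ T : SimpleGraph V, T ≤ G ∧ T.IsTree ∧ numLeaves T = k}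

/-- Every connected graph on a finite vertex set has a spanning tree. -/
lemma my_exists_spanning_tree {V : Type*} [Fintype V] (G : SimpleGraph V) (hG : G.Connected) :
    ∃ T : SimpleGraph V, T ≤ G ∧ T.IsTree := by
  classical
  set S : Set ℕ := {k | ∃ H : SimpleGraph V, H ≤ G ∧ H.Connected ∧ H.edgeSet.ncard = k} with hS
  have hne : S.Nonempty := ⟨G.edgeSet.ncard, G, le_refl _, hG, rfl⟩
  obtain ⟨H, hHG, hHc, hHcard⟩ := Nat.sInf_mem hne
  refine ⟨H, hHG, hHc, ?_⟩
  rw [isAcyclic_iff_forall_adj_isBridge]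
  intro v w hadj
  by_contra hnb
  rw [isBridge_iff] at hnb
  push_neg at hnb
  have hreach : (H \ fromEdgeSet {s(v, w)}).Reachable v w := hnb
  set H' : SimpleGraph V := H \ fromEdgeSet {s(v, w)} with hH'
  have hH'le : H' ≤ H := sdiff_le
  have hstep : ∀ {a b : V}, H.Adj a b → H'.Reachable a b := by
    intro a b hab
    by_cases he : s(a, b) = s(v, w)
    · rcases Sym2.eq_iff.mp he with ⟨rfl, rfl⟩ | ⟨rfl, rfl⟩
      · exact hreach
      · exact hreach.symm
    · exact Adj.reachable (by
        simp only [hH', sdiff_adj, fromEdgeSet_adj, Set.mem_singleton_iff]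
        exact ⟨hab, fun hc => he hc.1⟩)
  have hH'c : H'.Connected := by
    have hne' : Nonempty V := hHc.nonempty
    rw [connected_iff]
    refine ⟨?_, hne'⟩
    intro a b
    obtain ⟨p⟩ := hHc.preconnected a b
    induction p with
    | nil => exact Reachable.refl _
    | cons h q ih => exact (hstep h).trans ih
  have hedge : H'.edgeSet = H.edgeSet \ {s(v, w)} := by
    rw [hH', edgeSet_sdiff, edgeSet_fromEdgeSet, edgeSet_sdiff_sdiff_isDiag]
  have hmem : s(v, w) ∈ H.edgeSet := hadj
  have hlt : H'.edgeSet.ncard < H.edgeSet.ncard := by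
    rw [hedge]
    exact Set.ncard_lt_ncard (by
      constructor
      · exact Set.diff_subset
      · intro hsub
        exact ((hsub hmem).2 rfl)) H.edgeSet.toFinite
  have hmem' : H'.edgeSet.ncard ∈ S := ⟨H', hH'le.trans hHG, hH'c, rfl⟩
  have := Nat.sInf_le hmem'
  omega

/-- An internal vertex of a path has two distinct neighbors. -/
lemma my_internal_two_neighbors {V : Type*} {T : SimpleGraph V} {u v : V} (p : T.Walk u v)
    (hp : p.IsPath) {x : V} (hx : x ∈ p.support.tail.dropLast) :
    ∃ a b, a ≠ b ∧ a ∈ T.neighborSet x ∧ b ∈ T.neighborSet x := by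
  induction p with
  | nil => simp at hx
  | @cons u w v h q ih =>
    rw [Walk.support_cons, List.tail_cons] at hx
    cases q with
    | nil => simp at hx
    | @cons w y v h' r =>
      rw [Walk.support_cons, List.dropLast_cons_of_ne_nil r.support_ne_nil] at hx
      rcases List.mem_cons.mp hx with rfl | hx
      · refine ⟨u, y, ?_, h.symm, h'⟩
        rw [Walk.cons_isPath_iff] at hp
        intro huy
        exact hp.2 (by rw [Walk.support_cons]; exact List.mem_cons_of_mem _ (huy ▸ r.start_mem_support))
      · exact ih hp.of_cons (by rw [Walk.support_cons, List.tail_cons]; exact hx)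

theorem stmt1 {V : Type*} [Fintype V] (G : SimpleGraph V) (hG : G.Connected) :
    (G.edgeSet.ncard : ℤ) - (Fintype.card V : ℤ) + 2 + (maxLeaves G : ℤ) ≤ (tmc G : ℤ) := by
  classical
  -- a spanning tree achieving the maximum number of leaves
  have hM : maxLeaves G ∈ {k | ∃ T : SimpleGraph V, T ≤ G ∧ T.IsTree ∧ numLeaves T = k} := by
    apply Nat.sSup_mem
    · obtain ⟨T, hTG, hTt⟩ := my_exists_spanning_tree G hG
      exact ⟨numLeaves T, T, hTG, hTt, rfl⟩
    · refine ⟨Fintype.card V, ?_⟩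
      rintro k ⟨T, -, -, rfl⟩
      calc numLeaves T ≤ (Set.univ : Set V).ncard :=
            Set.ncard_le_ncard (Set.subset_univ _) Set.finite_univ
        _ = Fintype.card V := by rw [Set.ncard_univ, Nat.card_eq_fintype_card]
  obtain ⟨T, hTG, hTt, hTl⟩ := hM
  obtain ⟨fE, hfE⟩ := Countable.exists_injective_nat (Sym2 V)
  obtain ⟨fV, hfV⟩ := Countable.exists_injective_nat V
  set L : Set V := {v : V | (T.neighborSet v).ncard = 1} with hL
  set ce : Sym2 V → ℕ := fun e => if e ∈ T.edgeSet then 0 else 2 * fE e + 2 with hce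
  set cv : V → ℕ := fun v => if v ∈ L then 2 * fV v + 1 else 0 with hcv
  have hTE : T.edgeSet ⊆ G.edgeSet := edgeSet_mono hTG
  -- the coloring is a TMC-coloring
  have hTMC : IsTMCColoring G ce cv := by
    intro u v huv
    obtain ⟨w0⟩ := hTt.isConnected.preconnected u v
    set p : T.Walk u v := w0.toPath.1 with hp0
    have hp : p.IsPath := w0.toPath.2
    have hpe : ∀ e ∈ p.edges, e ∈ G.edgeSet := fun e he => hTE (p.edges_subset_edgeSet he)
    refine ⟨p.transfer G hpe, hp.transfer hpe, 0, ?_, ?_⟩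
    · intro e he
      rw [Walk.edges_transfer] at he
      have : e ∈ T.edgeSet := p.edges_subset_edgeSet he
      simp [hce, this]
    · intro x hx
      rw [Walk.support_transfer] at hx
      obtain ⟨a, b, hab, ha, hb⟩ := my_internal_two_neighbors p hp hx
      have hxL : x ∉ L := by
        intro hx1
        rw [hL, Set.mem_setOf_eq, Set.ncard_eq_one] at hx1
        obtain ⟨c, hc⟩ := hx1
        rw [hc, Set.mem_singleton_iff] at ha hb
        exact hab (ha.trans hb.symm)
      simp [hcv, hxL]
  -- counting the colors
  set A : Set ℕ := ce '' (G.edgeSet \ T.edgeSet) with hA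
  set B : Set ℕ := cv '' L with hB
  set S : Set ℕ := ce '' G.edgeSet ∪ Set.range cv with hSdef
  have hAval : ∀ c ∈ A, ∃ e, c = 2 * fE e + 2 := by
    rintro c ⟨e, he, rfl⟩
    exact ⟨e, by simp [hce, he.2]⟩
  have hBval : ∀ c ∈ B, ∃ y, c = 2 * fV y + 1 := by
    rintro c ⟨y, hy, rfl⟩
    exact ⟨y, by simp [hcv, hy]⟩
  have hsub : {0} ∪ A ∪ B ⊆ S := by
    intro c hc
    rcases hc with (hc | hc) | hc
    · rw [Set.mem_singleton_iff] at hc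
      subst hc
      by_cases hall : ∀ y : V, y ∈ L
      · obtain ⟨y⟩ := hG.nonempty
        have h1 := hall y
        rw [hL, Set.mem_setOf_eq, Set.ncard_eq_one] at h1
        obtain ⟨z, hz⟩ := h1
        have hadj : T.Adj y z := by
          have : z ∈ T.neighborSet y := by rw [hz]; exact rfl
          exact this
        exact Or.inl ⟨s(y, z), hTE hadj, by simp [hce, hadj]⟩
      · push_neg at hall
        obtain ⟨y, hy⟩ := hall
        exact Or.inr ⟨y, by simp [hcv, hy]⟩
    · rcases hc with ⟨e, he, rfl⟩
      exact Or.inl ⟨e, he.1, rfl⟩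
    · rcases hc with ⟨y, -, rfl⟩
      exact Or.inr ⟨y, rfl⟩
  have hAfin : A.Finite := ((G.edgeSet.toFinite.subset Set.diff_subset).image ce)
  have hBfin : B.Finite := (L.toFinite.image cv)
  have hSfin : S.Finite := (G.edgeSet.toFinite.image ce).union (Set.finite_range cv)
  have hd1 : Disjoint ({0} : Set ℕ) A := by
    rw [Set.disjoint_left]
    rintro c hc hcA
    obtain ⟨e, rfl⟩ := hAval c hcA
    simp at hc
  have hd2 : Disjoint (({0} : Set ℕ) ∪ A) B := by
    rw [Set.disjoint_left]
    rintro c hc hcB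
    obtain ⟨y, rfl⟩ := hBval c hcB
    rcases hc with hc | hc
    · simp at hc
    · obtain ⟨e, he⟩ := hAval _ hc
      omega
  have hcardA : A.ncard = (G.edgeSet \ T.edgeSet).ncard := by
    apply Set.ncard_image_of_injOn
    intro e1 h1 e2 h2 heq
    rw [hce] at heq
    simp only [if_neg h1.2, if_neg h2.2] at heq
    exact hfE (by omega)
  have hcardB : B.ncard = numLeaves T := by
    rw [hB]
    rw [Set.ncard_image_of_injOn]
    · rfl
    · intro y1 h1 y2 h2 heq
      rw [hcv] at heq
      simp only [if_pos h1, if_pos h2] at heq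
      exact hfV (by omega)
  have hcount : 1 + (G.edgeSet \ T.edgeSet).ncard + numLeaves T ≤ S.ncard := by
    calc 1 + (G.edgeSet \ T.edgeSet).ncard + numLeaves T
        = ({0} ∪ A ∪ B : Set ℕ).ncard := by
          rw [Set.ncard_union_eq hd2 ((Set.finite_singleton 0).union hAfin) hBfin,
            Set.ncard_union_eq hd1 (Set.finite_singleton 0) hAfin,
            Set.ncard_singleton, hcardA, hcardB]
      _ ≤ S.ncard := Set.ncard_le_ncard hsub hSfin
  -- tree edge count
  have hnT : T.edgeSet.ncard + 1 = Fintype.card V := by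
    have h1 := hTt.card_edgeFinset
    have h2 : T.edgeSet.ncard = T.edgeFinset.card := by
      rw [edgeFinset]
      exact Set.ncard_eq_toFinset_card' _
    omega
  have hTEle : T.edgeSet.ncard ≤ G.edgeSet.ncard := Set.ncard_le_ncard hTE G.edgeSet.toFinite
  have hdiff : (G.edgeSet \ T.edgeSet).ncard = G.edgeSet.ncard - T.edgeSet.ncard :=
    Set.ncard_diff hTE T.edgeSet.toFinite
  -- tmc is at least the number of colors used
  have hbdd : BddAbove {k | ∃ ce cv, IsTMCColoring G ce cv ∧ colorsUsed G ce cv = k} := by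
    refine ⟨Nat.card (Sym2 V) + Fintype.card V, ?_⟩
    rintro k ⟨ce', cv', -, rfl⟩
    unfold colorsUsed
    calc (ce' '' G.edgeSet ∪ Set.range cv').ncard
        ≤ (ce' '' G.edgeSet).ncard + (Set.range cv').ncard := Set.ncard_union_le _ _
      _ ≤ Nat.card (Sym2 V) + Fintype.card V := by
          gcongr
          · calc (ce' '' G.edgeSet).ncard ≤ G.edgeSet.ncard :=
                  Set.ncard_image_le G.edgeSet.toFinite
              _ ≤ (Set.univ : Set (Sym2 V)).ncard :=
                  Set.ncard_le_ncard (Set.subset_univ _) Set.finite_univ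
              _ = Nat.card (Sym2 V) := Set.ncard_univ _
          · calc (Set.range cv').ncard = (cv' '' Set.univ).ncard := by rw [Set.image_univ]
              _ ≤ (Set.univ : Set V).ncard := Set.ncard_image_le Set.finite_univ
              _ = Fintype.card V := by rw [Set.ncard_univ, Nat.card_eq_fintype_card]
  have htmc : colorsUsed G ce cv ≤ tmc G := le_csSup hbdd ⟨ce, cv, hTMC, rfl⟩
  have hcu : colorsUsed G ce cv = S.ncard := rfl
  omega
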